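/- For nonnegative integers a, b, c, the sum over k from -a to a of (-1)^k · C(a+b, a+k) · C(b+c, b+k) · C(c+a, c+k) equals (a+b+c)!/(a!·b!·c!). -/

import Mathlib

open Finset

/-- Binomial coefficient `C n k` for an integer `k`, equal to `0` when `k < 0`
(and automatically `0` when `k > n`). -/
def ichoose (n : ℕ) (k : ℤ) : ℕ := if 0 ≤ k then n.choose k.toNat else 0

lemma ichoose_of_neg {n : ℕ} {k : ℤ} (h : k < 0) : ichoose n k = 0 := by
  simp [ichoose, not_le.2 h]

lemma ichoose_of_gt {n : ℕ} {k : ℤ} (h : (n : ℤ) < k) : ichoose n k = 0 := by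
  have h0 : 0 ≤ k := le_trans (Int.natCast_nonneg n) h.le
  rw [ichoose, if_pos h0]
  exact Nat.choose_eq_zero_of_lt (by omega)

lemma ichoose_natCast (n m : ℕ) : ichoose n (m : ℤ) = n.choose m := by
  simp [ichoose]

lemma ichoose_pascal (n : ℕ) (k : ℤ) :
    ichoose (n + 1) k = ichoose n k + ichoose n (k - 1) := by
  rcases lt_trichotomy k 0 with h | h | h
  · rw [ichoose_of_neg h, ichoose_of_neg h, ichoose_of_neg (by omega)]
  · subst h
    rw [ichoose_of_neg (by norm_num : (0:ℤ) - 1 < 0)]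
    simp [ichoose]
  · obtain ⟨j, rfl⟩ : ∃ j : ℕ, k = (j : ℤ) + 1 := ⟨(k - 1).toNat, by omega⟩
    have h1 : ((j:ℤ) + 1).toNat = j + 1 := by omega
    have h2 : ((j:ℤ) + 1 - 1).toNat = j := by omega
    rw [ichoose, ichoose, ichoose, if_pos (by omega), if_pos (by omega), if_pos (by omega),
      h1, h2]
    rw [Nat.choose_succ_succ n j, Nat.add_comm]

/-- The summand of Dixon's identity. -/
def dterm (a b c : ℕ) (k : ℤ) : ℚ :=
  (-1 : ℚ) ^ k * (ichoose (a + b) (a + k) : ℚ) * (ichoose (b + c) (b + k) : ℚ) *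
    (ichoose (c + a) (c + k) : ℚ)

lemma dterm_eq_zero {a b c : ℕ} {k : ℤ} (h : k ∉ Finset.Icc (-(a : ℤ)) (a : ℤ)) :
    dterm a b c k = 0 := by
  simp only [Finset.mem_Icc, not_and_or, not_le] at h
  rcases h with h | h
  · have : ((a : ℤ) + k) < 0 := by omega
    rw [dterm, ichoose_of_neg this]; simp
  · have : (((c + a : ℕ)) : ℤ) < (c : ℤ) + k := by push_cast; omega
    rw [dterm, ichoose_of_gt this]; simp

/-- The sum may be extended to any larger symmetric range. -/
lemma sum_dterm_ext (a b c N : ℕ) (hN : a ≤ N) :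
    ∑ k ∈ Finset.Icc (-(a : ℤ)) (a : ℤ), dterm a b c k
      = ∑ k ∈ Finset.Icc (-(N : ℤ)) (N : ℤ), dterm a b c k := by
  apply Finset.sum_subset
  · intro x hx; simp only [Finset.mem_Icc] at *; omega
  · intro x _ hx; exact dterm_eq_zero hx

/-- WZ-style certificate function. -/
def gfun (a b c : ℕ) (k : ℤ) : ℚ :=
  (-1 : ℚ) ^ k * (ichoose (a + b + 1) ((a : ℤ) + 1 + k) : ℚ) *
    (ichoose (b + c + 1) ((b : ℤ) + 1 + k) : ℚ) *
    (ichoose (c + a + 1) ((c : ℤ) + 1 + k) : ℚ)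

lemma gfun_vanish {a b c : ℕ} {k : ℤ} (h : k < -(a : ℤ) - 1 ∨ (a : ℤ) < k) :
    gfun a b c k = 0 := by
  rcases h with h | h
  · rw [gfun, ichoose_of_neg (show (a : ℤ) + 1 + k < 0 by omega)]; simp
  · rw [gfun, ichoose_of_gt (show ((c + a + 1 : ℕ) : ℤ) < (c : ℤ) + 1 + k by push_cast; omega)]
    simp

/-- The key pointwise (Pascal ring) identity. -/
lemma key (a b c : ℕ) (k : ℤ) :
    dterm (a+1) (b+1) (c+1) k =
      dterm a (b+1) (c+1) k + dterm (a+1) b (c+1) k + dterm (a+1) (b+1) c k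
        + (gfun a b c k - gfun a b c (k-1)) := by
  simp only [dterm, gfun]
  push_cast
  rw [show a + 1 + (b + 1) = (a + b + 1) + 1 from by ring,
      show b + 1 + (c + 1) = (b + c + 1) + 1 from by ring,
      show c + 1 + (a + 1) = (c + a + 1) + 1 from by ring,
      show a + (b + 1) = a + b + 1 from by ring,
      show c + 1 + a = c + a + 1 from by ring,
      show a + 1 + b = a + b + 1 from by ring,
      show b + (c + 1) = b + c + 1 from by ring,
      show b + 1 + c = b + c + 1 from by ring,
      show c + (a + 1) = c + a + 1 from by ring,
      ichoose_pascal (a + b + 1) ((a : ℤ) + 1 + k),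
      ichoose_pascal (b + c + 1) ((b : ℤ) + 1 + k),
      ichoose_pascal (c + a + 1) ((c : ℤ) + 1 + k)]
  push_cast
  rw [zpow_sub_one₀ (by norm_num : (-1:ℚ) ≠ 0), inv_neg_one]
  simp only [show (a:ℤ) + 1 + k - 1 = (a:ℤ) + k from by ring,
    show (b:ℤ) + 1 + k - 1 = (b:ℤ) + k from by ring,
    show (c:ℤ) + 1 + k - 1 = (c:ℤ) + k from by ring,
    show (a:ℤ) + 1 + (k - 1) = (a:ℤ) + k from by ring,
    show (b:ℤ) + 1 + (k - 1) = (b:ℤ) + k from by ring,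
    show (c:ℤ) + 1 + (k - 1) = (c:ℤ) + k from by ring]
  ring

lemma sum_gfun (a b c : ℕ) :
    ∑ k ∈ Finset.Icc (-((a:ℕ)+1 : ℤ)) (((a:ℕ)+1 : ℤ)), (gfun a b c k - gfun a b c (k-1)) = 0 := by
  rw [Finset.sum_sub_distrib]
  have h1 : ∑ k ∈ Finset.Icc (-((a:ℕ)+1 : ℤ)) (((a:ℕ)+1 : ℤ)), gfun a b c (k-1)
      = ∑ k ∈ Finset.Icc (-(a:ℤ)-2) (a:ℤ), gfun a b c k :=
    Finset.sum_nbij' (fun k => k - 1) (fun k => k + 1)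
      (by intro x hx; simp only [Finset.mem_Icc] at *; omega)
      (by intro x hx; simp only [Finset.mem_Icc] at *; omega)
      (by intro x _; ring) (by intro x _; ring) (fun x _ => rfl)
  have h2 : ∑ k ∈ Finset.Icc (-(a:ℤ)-2) (a:ℤ), gfun a b c k
      = ∑ k ∈ Finset.Icc (-(a:ℤ)-2) ((a:ℤ)+1), gfun a b c k := by
    apply Finset.sum_subset
    · intro x hx; simp only [Finset.mem_Icc] at *; omega
    · intro x hx hx'; simp only [Finset.mem_Icc] at *
      exact gfun_vanish (Or.inr (by omega))
  have h3 : ∑ k ∈ Finset.Icc (-((a:ℕ)+1 : ℤ)) (((a:ℕ)+1 : ℤ)), gfun a b c k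
      = ∑ k ∈ Finset.Icc (-(a:ℤ)-2) ((a:ℤ)+1), gfun a b c k := by
    apply Finset.sum_subset
    · intro x hx; simp only [Finset.mem_Icc] at *; omega
    · intro x hx hx'; simp only [Finset.mem_Icc] at *
      exact gfun_vanish (Or.inl (by omega))
  rw [h1, h2, h3, sub_self]

/-- The sum as a function. -/
noncomputable def Ssum (a b c : ℕ) : ℚ := ∑ k ∈ Finset.Icc (-(a : ℤ)) (a : ℤ), dterm a b c k

lemma Ssum_rec (a b c : ℕ) :
    Ssum (a+1) (b+1) (c+1) = Ssum a (b+1) (c+1) + Ssum (a+1) b (c+1) + Ssum (a+1) (b+1) c := by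
  have hcast : ((a + 1 : ℕ) : ℤ) = (a : ℤ) + 1 := by push_cast; ring
  unfold Ssum
  rw [sum_dterm_ext a (b+1) (c+1) (a+1) (by omega),
      sum_dterm_ext (a+1) b (c+1) (a+1) le_rfl,
      sum_dterm_ext (a+1) (b+1) c (a+1) le_rfl,
      ← Finset.sum_add_distrib, ← Finset.sum_add_distrib]
  have := sum_gfun a b c
  rw [show (((a:ℕ)+1 : ℤ)) = ((a+1 : ℕ) : ℤ) from by push_cast; ring] at this
  calc ∑ k ∈ Finset.Icc (-((a+1 : ℕ) : ℤ)) ((a+1 : ℕ) : ℤ), dterm (a+1) (b+1) (c+1) k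
      = ∑ k ∈ Finset.Icc (-((a+1 : ℕ) : ℤ)) ((a+1 : ℕ) : ℤ),
          (dterm a (b+1) (c+1) k + dterm (a+1) b (c+1) k + dterm (a+1) (b+1) c k
            + (gfun a b c k - gfun a b c (k-1))) := by
        exact Finset.sum_congr rfl fun k _ => key a b c k
    _ = _ := by
        rw [Finset.sum_add_distrib, this, add_zero]

lemma choose_cast_eq (i j : ℕ) :
    (((i + j).choose j : ℕ) : ℚ) = ((i + j).factorial : ℚ) / (i.factorial * j.factorial) := by
  rw [eq_div_iff (by positivity)]
  rw [← Nat.add_choose_mul_factorial_mul_factorial i j]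
  push_cast; ring

lemma Ssum_eq : ∀ n a b c : ℕ, a + b + c = n →
    Ssum a b c = ((a + b + c).factorial : ℚ) /
      ((a.factorial : ℚ) * (b.factorial : ℚ) * (c.factorial : ℚ)) := by
  intro n
  induction n using Nat.strong_induction_on with
  | _ n ih =>
    intro a b c hn
    match a, b, c with
    | 0, b, c =>
      have : Ssum 0 b c = dterm 0 b c 0 := by
        unfold Ssum
        norm_num
      rw [this]
      unfold dterm
      rw [show ((0:ℕ):ℤ) + (0:ℤ) = ((0:ℕ):ℤ) from by ring,
          show ((b:ℕ):ℤ) + (0:ℤ) = ((b:ℕ):ℤ) from by ring,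
          show ((c:ℕ):ℤ) + (0:ℤ) = ((c:ℕ):ℤ) from by ring,
          ichoose_natCast, ichoose_natCast, ichoose_natCast]
      simp only [zpow_zero, Nat.zero_add, Nat.add_zero, Nat.choose_zero_right,
        Nat.choose_self]
      rw [show b + c = c + b from by ring, choose_cast_eq c b]
      push_cast
      rw [Nat.factorial_zero]
      ring
    | a+1, 0, c =>
      have : Ssum (a+1) 0 c = dterm (a+1) 0 c 0 := by
        unfold Ssum
        apply Finset.sum_eq_single_of_mem
        · simp only [Finset.mem_Icc]; omega
        · intro k hk hk0
          rcases lt_or_gt_of_ne hk0 with h | h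
          · rw [dterm, ichoose_of_neg (show ((0:ℕ):ℤ) + k < 0 by push_cast; omega)]; simp
          · rw [dterm, ichoose_of_gt
              (show ((a+1+0 : ℕ):ℤ) < ((a+1:ℕ):ℤ) + k by push_cast; omega)]; simp
      rw [this]
      unfold dterm
      rw [show ((a+1:ℕ):ℤ) + (0:ℤ) = ((a+1:ℕ):ℤ) from by ring,
          show ((0:ℕ):ℤ) + (0:ℤ) = ((0:ℕ):ℤ) from by ring,
          show ((c:ℕ):ℤ) + (0:ℤ) = ((c:ℕ):ℤ) from by ring,
          ichoose_natCast, ichoose_natCast, ichoose_natCast]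
      simp only [zpow_zero, Nat.add_zero, Nat.choose_zero_right, Nat.choose_self]
      rw [show c + (a+1) = (a+1) + c from by ring, choose_cast_eq (a+1) c]
      rw [Nat.factorial_zero]
      rw [show a + 1 + 0 + c = (a + 1) + c from by ring]
      push_cast
      ring
    | a+1, b+1, 0 =>
      have : Ssum (a+1) (b+1) 0 = dterm (a+1) (b+1) 0 0 := by
        unfold Ssum
        apply Finset.sum_eq_single_of_mem
        · simp only [Finset.mem_Icc]; omega
        · intro k hk hk0
          rcases lt_or_gt_of_ne hk0 with h | h
          · rw [dterm, ichoose_of_neg (show ((0:ℕ):ℤ) + k < 0 by push_cast; omega)]; simp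
          · rw [dterm, ichoose_of_gt
              (show ((b+1+0 : ℕ):ℤ) < ((b+1:ℕ):ℤ) + k by push_cast; omega)]; simp
      rw [this]
      unfold dterm
      rw [show ((a+1:ℕ):ℤ) + (0:ℤ) = ((a+1:ℕ):ℤ) from by ring,
          show ((b+1:ℕ):ℤ) + (0:ℤ) = ((b+1:ℕ):ℤ) from by ring,
          show ((0:ℕ):ℤ) + (0:ℤ) = ((0:ℕ):ℤ) from by ring,
          ichoose_natCast, ichoose_natCast, ichoose_natCast]
      simp only [zpow_zero, Nat.add_zero, Nat.zero_add, Nat.choose_zero_right,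
        Nat.choose_self]
      rw [show (b+1+0) = b+1 from by ring, show a+1+(b+1) = (b+1)+(a+1) from by ring,
        choose_cast_eq (b+1) (a+1)]
      rw [Nat.factorial_zero]
      push_cast
      field_simp
    | a+1, b+1, c+1 =>
      rw [Ssum_rec a b c,
        ih (a+(b+1)+(c+1)) (by omega) a (b+1) (c+1) rfl,
        ih ((a+1)+b+(c+1)) (by omega) (a+1) b (c+1) rfl,
        ih ((a+1)+(b+1)+c) (by omega) (a+1) (b+1) c rfl]
      have e1 : a+1+(b+1)+(c+1) = (a+b+c+2)+1 := by omega
      have e2 : a+(b+1)+(c+1) = a+b+c+2 := by omega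
      have e3 : (a+1)+b+(c+1) = a+b+c+2 := by omega
      have e4 : (a+1)+(b+1)+c = a+b+c+2 := by omega
      rw [e1, e2, e3, e4, Nat.factorial_succ (a+b+c+2), Nat.factorial_succ a,
        Nat.factorial_succ b, Nat.factorial_succ c]
      have ha : (a.factorial : ℚ) ≠ 0 := Nat.cast_ne_zero.mpr a.factorial_ne_zero
      have hb : (b.factorial : ℚ) ≠ 0 := Nat.cast_ne_zero.mpr b.factorial_ne_zero
      have hc : (c.factorial : ℚ) ≠ 0 := Nat.cast_ne_zero.mpr c.factorial_ne_zero
      push_cast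
      field_simp
      ring

theorem dixon_generalized (a b c : ℕ) :
    ∑ k ∈ Finset.Icc (-(a : ℤ)) (a : ℤ),
      (-1 : ℚ) ^ k * (ichoose (a + b) (a + k) : ℚ) * (ichoose (b + c) (b + k) : ℚ) *
        (ichoose (c + a) (c + k) : ℚ)
      = ((a + b + c).factorial : ℚ) /
          ((a.factorial : ℚ) * (b.factorial : ℚ) * (c.factorial : ℚ)) := by
  have h := Ssum_eq (a + b + c) a b c rfl
  simpa only [Ssum, dterm] using h
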